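/- Let a be a vertex of a graph G. Then, as polynomials, (1−x−y) · Σ_{W : N[a] ∩ W = ∅} x^{|W|} y^{|N_G(W)|} = J(G) − x y^{|N(a)|} J(G − N[a]) − x J(G∖a) − y J(G − a). -/

import Mathlib

open Finset
open Function
open scoped Classical

/-- External neighbourhood N(W) = N[W] \ W of a vertex subset. -/
noncomputable def extN {V : Type} [Fintype V] (G : SimpleGraph V) (W : Finset V) : Finset V :=
  Finset.univ.filter (fun v => v ∉ W ∧ ∃ w ∈ W, G.Adj v w)

/-- The bivariate domination polynomial J(G;x,y) = ∑_{W ⊆ V} x^|W| y^|N(W)|. -/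
noncomputable def JP {V : Type} [Fintype V] (G : SimpleGraph V) (x y : ℝ) : ℝ :=
  ∑ W : Finset V, x ^ W.card * y ^ (extN G W).card

/-- Vertex deletion G − a. -/
noncomputable def Gdel {V : Type} (G : SimpleGraph V) (a : V) : SimpleGraph {v : V // v ≠ a} :=
  G.induce {v : V | v ≠ a}

/-- Deletion of a set of vertices. -/
noncomputable def GdelSet {V : Type} (G : SimpleGraph V) (S : Set V) : SimpleGraph {v : V // v ∉ S} :=
  G.induce {v : V | v ∉ S}

/-- Vertex contraction G∖a: join all neighbours of a, then delete a. -/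
noncomputable def Gcon {V : Type} (G : SimpleGraph V) (a : V) : SimpleGraph {v : V // v ≠ a} where
  Adj u v := u ≠ v ∧ (G.Adj u.val v.val ∨ (G.Adj u.val a ∧ G.Adj a v.val))
  symm := ⟨fun _ _ ⟨h1, h2⟩ =>
    ⟨fun e => h1 e.symm, h2.imp G.adj_symm (fun ⟨p, q⟩ => ⟨G.adj_symm q, G.adj_symm p⟩)⟩⟩
  loopless := ⟨fun _ h => h.1 rfl⟩

private lemma mem_map_sub {V : Type} {p : V → Prop} (W : Finset {v // p v}) (v : V) :
    v ∈ W.map (Embedding.subtype p) ↔ ∃ h : p v, (⟨v, h⟩ : {v // p v}) ∈ W := by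
  simp only [Finset.mem_map, Embedding.coe_subtype]
  constructor
  · rintro ⟨⟨u, hu⟩, huW, rfl⟩; exact ⟨hu, huW⟩
  · rintro ⟨h, hW⟩; exact ⟨⟨v, h⟩, hW, rfl⟩

private lemma subtype_map_val {V : Type} {p : V → Prop} [DecidablePred p] (W : Finset {v // p v}) :
    (W.map (Embedding.subtype p)).subtype p = W := by
  ext w
  simp only [Finset.mem_subtype, mem_map_sub]
  exact ⟨fun ⟨h, hW⟩ => hW, fun h => ⟨w.2, h⟩⟩

private lemma mem_extN {V : Type} [Fintype V] (G : SimpleGraph V) (W : Finset V) (v : V) :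
    v ∈ extN G W ↔ v ∉ W ∧ ∃ w ∈ W, G.Adj v w := by
  simp [extN]

section
set_option linter.unusedSectionVars false
variable {V : Type} [Fintype V] (G : SimpleGraph V) (a : V)

private lemma gcon_adj (u v : {v : V // v ≠ a}) :
    (Gcon G a).Adj u v ↔ u ≠ v ∧ (G.Adj u.val v.val ∨ (G.Adj u.val a ∧ G.Adj a v.val)) := Iff.rfl

private lemma gdel_adj (u v : {v : V // v ≠ a}) :
    (Gdel G a).Adj u v ↔ G.Adj u.val v.val := Iff.rfl

private lemma gdelset_adj {S : Set V} (u v : {v : V // v ∉ S}) :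
    (GdelSet G S).Adj u v ↔ G.Adj u.val v.val := Iff.rfl

private lemma con_extN_hit (W : Finset {v : V // v ≠ a}) (hq : ∃ w ∈ W, G.Adj a w.val) :
    (extN (Gcon G a) W).map (Embedding.subtype _) =
      extN G (insert a (W.map (Embedding.subtype _))) := by
  ext v
  simp only [mem_map_sub, mem_extN, gcon_adj, Finset.mem_insert, not_or]
  constructor
  · rintro ⟨hva, hvW, w, hwW, hne, hd⟩
    refine ⟨⟨hva, fun ⟨h', hin⟩ => hvW hin⟩, ?_⟩
    rcases hd with hadj | ⟨hva', _⟩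
    · exact ⟨w.val, Or.inr ⟨w.2, hwW⟩, hadj⟩
    · exact ⟨a, Or.inl rfl, hva'⟩
  · rintro ⟨⟨hva, hvM⟩, w, (rfl | ⟨hwa, hwW⟩), hadj⟩
    · obtain ⟨w₀, hw₀W, hw₀a⟩ := hq
      refine ⟨hva, fun hc => hvM ⟨hva, hc⟩, w₀, hw₀W, fun h => ?_, Or.inr ⟨hadj, hw₀a⟩⟩
      exact hvM ⟨hva, h ▸ hw₀W⟩
    · exact ⟨hva, fun hc => hvM ⟨hva, hc⟩, ⟨w, hwa⟩, hwW,
        fun h => G.ne_of_adj hadj (congrArg Subtype.val h), Or.inl hadj⟩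

private lemma con_extN_miss (W : Finset {v : V // v ≠ a}) (hq : ∀ w ∈ W, ¬ G.Adj a w.val) :
    (extN (Gcon G a) W).map (Embedding.subtype _) =
      extN G (W.map (Embedding.subtype _)) := by
  ext v
  simp only [mem_map_sub, mem_extN, gcon_adj]
  constructor
  · rintro ⟨hva, hvW, w, hwW, hne, hd⟩
    rcases hd with hadj | ⟨_, haw⟩
    · exact ⟨fun ⟨h', hin⟩ => hvW hin, w.val, ⟨w.2, hwW⟩, hadj⟩
    · exact absurd haw (hq w hwW)
  · rintro ⟨hvM, w, ⟨hwa, hwW⟩, hadj⟩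
    have hva : v ≠ a := by
      rintro rfl; exact hq ⟨w, hwa⟩ hwW hadj
    exact ⟨hva, fun hc => hvM ⟨hva, hc⟩, ⟨w, hwa⟩, hwW,
      fun h => G.ne_of_adj hadj (congrArg Subtype.val h), Or.inl hadj⟩

private lemma del_extN_hit (W : Finset {v : V // v ≠ a}) (hq : ∃ w ∈ W, G.Adj a w.val) :
    extN G (W.map (Embedding.subtype _)) =
      insert a ((extN (Gdel G a) W).map (Embedding.subtype _)) := by
  ext v
  simp only [mem_map_sub, mem_extN, gdel_adj, Finset.mem_insert]
  constructor
  · rintro ⟨hvM, w, ⟨hwa, hwW⟩, hadj⟩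
    by_cases hva : v = a
    · exact Or.inl hva
    · exact Or.inr ⟨hva, fun hc => hvM ⟨hva, hc⟩, ⟨w, hwa⟩, hwW, hadj⟩
  · rintro (rfl | ⟨hva, hvW, w, hwW, hadj⟩)
    · obtain ⟨w₀, hw₀W, hw₀a⟩ := hq
      exact ⟨fun ⟨h', _⟩ => h' rfl, w₀.val, ⟨w₀.2, hw₀W⟩, hw₀a⟩
    · exact ⟨fun ⟨h', hin⟩ => hvW hin, w.val, ⟨w.2, hwW⟩, hadj⟩

private lemma del_extN_miss (W : Finset {v : V // v ≠ a}) (hq : ∀ w ∈ W, ¬ G.Adj a w.val) :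
    (extN (Gdel G a) W).map (Embedding.subtype _) =
      extN G (W.map (Embedding.subtype _)) := by
  ext v
  simp only [mem_map_sub, mem_extN, gdel_adj]
  constructor
  · rintro ⟨hva, hvW, w, hwW, hadj⟩
    exact ⟨fun ⟨h', hin⟩ => hvW hin, w.val, ⟨w.2, hwW⟩, hadj⟩
  · rintro ⟨hvM, w, ⟨hwa, hwW⟩, hadj⟩
    have hva : v ≠ a := by
      rintro rfl; exact hq ⟨w, hwa⟩ hwW hadj
    exact ⟨hva, fun hc => hvM ⟨hva, hc⟩, ⟨w, hwa⟩, hwW, hadj⟩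

private lemma dset_extN (W : Finset {v : V // v ∉ {v : V | v = a ∨ G.Adj a v}}) :
    extN G (insert a (W.map (Embedding.subtype _))) =
      (Finset.univ.filter (fun v => G.Adj a v)) ∪
        (extN (GdelSet G {v : V | v = a ∨ G.Adj a v}) W).map (Embedding.subtype _) := by
  ext v
  have hS : ∀ u : V, u ∉ {v : V | v = a ∨ G.Adj a v} ↔ ¬(u = a ∨ G.Adj a u) := fun u => Iff.rfl
  simp only [mem_map_sub, mem_extN, gdelset_adj, Finset.mem_insert, Finset.mem_union,
    Finset.mem_filter, Finset.mem_univ, true_and, not_or, hS]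
  constructor
  · rintro ⟨⟨hva, hvM⟩, w, (rfl | ⟨hwS, hwW⟩), hadj⟩
    · exact Or.inl (G.adj_symm hadj)
    · by_cases hav : G.Adj a v
      · exact Or.inl hav
      · exact Or.inr ⟨⟨hva, hav⟩, fun hc => hvM ⟨⟨hva, hav⟩, hc⟩,
          ⟨w, not_or.2 hwS⟩, hwW, hadj⟩
  · rintro (hav | ⟨hvS, hvW, w, hwW, hadj⟩)
    · exact ⟨⟨fun h => G.loopless.irrefl a (h ▸ hav), fun ⟨hvS, _⟩ => hvS.2 hav⟩,
        a, Or.inl rfl, G.adj_symm hav⟩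
    · exact ⟨⟨fun h => hvS.1 h, fun ⟨h', hin⟩ => hvW hin⟩,
        w.val, Or.inr ⟨not_or.1 w.2, hwW⟩, hadj⟩
end

section
set_option linter.unusedSectionVars false
variable {V : Type} [Fintype V] (G : SimpleGraph V) (a : V)

private lemma map_ne_a (W : Finset {v : V // v ≠ a}) : a ∉ W.map (Embedding.subtype _) :=
  fun h => ((mem_map_sub W a).1 h).1 rfl

private lemma JP_dset (x y : ℝ) :
    x * y ^ (Finset.univ.filter (fun v => G.Adj a v)).card *
        JP (GdelSet G {v : V | v = a ∨ G.Adj a v}) x y =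
      ∑ W ∈ Finset.univ.filter (fun W : Finset V => a ∈ W ∧ ∀ w ∈ W, ¬ G.Adj a w),
        x ^ W.card * y ^ (extN G W).card := by
  rw [JP, Finset.mul_sum]
  refine Finset.sum_bij' (fun W _ => insert a (W.map (Embedding.subtype _)))
    (fun W _ => (W.erase a).subtype (fun v => v ∉ {v : V | v = a ∨ G.Adj a v}))
    ?_ ?_ ?_ ?_ ?_
  · intro W _
    simp only [Finset.mem_filter, Finset.mem_univ, true_and]
    refine ⟨Finset.mem_insert_self _ _, ?_⟩
    rintro w hw
    rcases Finset.mem_insert.1 hw with rfl | hwM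
    · exact fun h => G.loopless.irrefl w h
    · obtain ⟨hS, _⟩ := (mem_map_sub _ _).1 hwM
      exact fun h => hS (Or.inr h)
  · intro W _; exact Finset.mem_univ _
  · intro W _
    have hnot : a ∉ W.map (Embedding.subtype fun v => v ∉ {v : V | v = a ∨ G.Adj a v}) :=
      fun h => ((mem_map_sub W a).1 h).1 (Or.inl rfl)
    rw [Finset.erase_insert hnot, subtype_map_val]
  · intro W hW
    simp only [Finset.mem_filter, Finset.mem_univ, true_and] at hW
    rw [Finset.subtype_map_of_mem, Finset.insert_erase hW.1]
    intro w hw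
    obtain ⟨hwa, hwW⟩ := Finset.mem_erase.1 hw
    rintro (rfl | hadj)
    · exact hwa rfl
    · exact hW.2 w hwW hadj
  · intro W _
    have hnot : a ∉ W.map (Embedding.subtype fun v => v ∉ {v : V | v = a ∨ G.Adj a v}) :=
      fun h => ((mem_map_sub W a).1 h).1 (Or.inl rfl)
    have hcard : (insert a (W.map (Embedding.subtype _))).card = W.card + 1 := by
      rw [Finset.card_insert_of_notMem hnot, Finset.card_map]
    have hdisj : Disjoint (Finset.univ.filter (fun v => G.Adj a v))
        ((extN (GdelSet G {v : V | v = a ∨ G.Adj a v}) W).map (Embedding.subtype _)) := by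
      rw [Finset.disjoint_left]
      intro v hv hv'
      obtain ⟨hS, _⟩ := (mem_map_sub _ _).1 hv'
      exact hS (Or.inr (Finset.mem_filter.1 hv).2)
    have hext : (extN G (insert a (W.map (Embedding.subtype _)))).card =
        (Finset.univ.filter (fun v => G.Adj a v)).card +
          (extN (GdelSet G {v : V | v = a ∨ G.Adj a v}) W).card := by
      rw [dset_extN, Finset.card_union_of_disjoint hdisj, Finset.card_map]
    rw [hcard, hext, pow_add, pow_succ]
    ring
end

section
set_option linter.unusedSectionVars false
variable {V : Type} [Fintype V] (G : SimpleGraph V) (a : V)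

private lemma JP_con (x y : ℝ) :
    x * JP (Gcon G a) x y =
      (∑ W ∈ Finset.univ.filter (fun W : Finset V => a ∈ W ∧ ∃ w ∈ W, G.Adj a w),
        x ^ W.card * y ^ (extN G W).card)
      + x * ∑ W ∈ Finset.univ.filter (fun W : Finset V => a ∉ W ∧ ∀ w ∈ W, ¬ G.Adj a w),
          x ^ W.card * y ^ (extN G W).card := by
  rw [JP, ← Finset.sum_filter_add_sum_filter_not Finset.univ
    (fun W : Finset {v : V // v ≠ a} => ∃ w ∈ W, G.Adj a w.val), mul_add, Finset.mul_sum,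
    Finset.mul_sum]
  congr 1
  · refine Finset.sum_bij' (fun W _ => insert a (W.map (Embedding.subtype _)))
      (fun W _ => (W.erase a).subtype (fun v => v ≠ a)) ?_ ?_ ?_ ?_ ?_
    · intro W hW
      simp only [Finset.mem_filter, Finset.mem_univ, true_and] at hW ⊢
      obtain ⟨w₀, hw₀W, hw₀a⟩ := hW
      exact ⟨Finset.mem_insert_self _ _,
        w₀.val, Finset.mem_insert_of_mem ((mem_map_sub _ _).2 ⟨w₀.2, hw₀W⟩), hw₀a⟩
    · intro W hW
      simp only [Finset.mem_filter, Finset.mem_univ, true_and] at hW ⊢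
      obtain ⟨haW, w₀, hw₀W, hw₀a⟩ := hW
      have hw₀ : w₀ ≠ a := fun h => G.loopless.irrefl a (h ▸ hw₀a)
      exact ⟨⟨w₀, hw₀⟩, Finset.mem_subtype.2 (by simpa using Finset.mem_erase.2 ⟨hw₀, hw₀W⟩), hw₀a⟩
    · intro W _
      rw [Finset.erase_insert (map_ne_a a W), subtype_map_val]
    · intro W hW
      simp only [Finset.mem_filter, Finset.mem_univ, true_and] at hW
      rw [Finset.subtype_map_of_mem (fun w hw => (Finset.mem_erase.1 hw).1),
        Finset.insert_erase hW.1]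
    · intro W hW
      simp only [Finset.mem_filter, Finset.mem_univ, true_and] at hW
      have hcard : (insert a (W.map (Embedding.subtype _))).card = W.card + 1 := by
        rw [Finset.card_insert_of_notMem (map_ne_a a W), Finset.card_map]
      have hext : (extN G (insert a (W.map (Embedding.subtype _)))).card =
          (extN (Gcon G a) W).card := by
        rw [← con_extN_hit G a W hW, Finset.card_map]
      rw [hcard, hext, pow_succ]
      ring
  · rw [Finset.mul_sum]
    refine Finset.sum_bij' (fun W _ => W.map (Embedding.subtype _))
      (fun W _ => W.subtype (fun v => v ≠ a)) ?_ ?_ ?_ ?_ ?_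
    · intro W hW
      simp only [Finset.mem_filter, Finset.mem_univ, true_and, not_exists] at hW ⊢
      refine ⟨map_ne_a a W, fun w hw => ?_⟩
      obtain ⟨hwa, hwW⟩ := (mem_map_sub _ _).1 hw
      exact fun hadj => hW ⟨w, hwa⟩ ⟨hwW, hadj⟩
    · intro W hW
      simp only [Finset.mem_filter, Finset.mem_univ, true_and, not_exists] at hW ⊢
      rintro w ⟨hw, hadj⟩
      exact hW.2 w.val (by simpa using Finset.mem_subtype.1 hw) hadj
    · intro W _; rw [subtype_map_val]
    · intro W hW
      simp only [Finset.mem_filter, Finset.mem_univ, true_and] at hW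
      exact Finset.subtype_map_of_mem (fun w hw => fun h => hW.1 (h ▸ hw))
    · intro W hW
      simp only [Finset.mem_filter, Finset.mem_univ, true_and, not_exists] at hW
      have hext : (extN G (W.map (Embedding.subtype _))).card = (extN (Gcon G a) W).card := by
        rw [← con_extN_miss G a W (fun w hw hadj => hW w ⟨hw, hadj⟩), Finset.card_map]
      rw [hext, Finset.card_map]

private lemma JP_del (x y : ℝ) :
    y * JP (Gdel G a) x y =
      (∑ W ∈ Finset.univ.filter (fun W : Finset V => a ∉ W ∧ ∃ w ∈ W, G.Adj a w),
        x ^ W.card * y ^ (extN G W).card)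
      + y * ∑ W ∈ Finset.univ.filter (fun W : Finset V => a ∉ W ∧ ∀ w ∈ W, ¬ G.Adj a w),
          x ^ W.card * y ^ (extN G W).card := by
  rw [JP, ← Finset.sum_filter_add_sum_filter_not Finset.univ
    (fun W : Finset {v : V // v ≠ a} => ∃ w ∈ W, G.Adj a w.val), mul_add, Finset.mul_sum,
    Finset.mul_sum]
  congr 1
  · refine Finset.sum_bij' (fun W _ => W.map (Embedding.subtype _))
      (fun W _ => W.subtype (fun v => v ≠ a)) ?_ ?_ ?_ ?_ ?_
    · intro W hW
      simp only [Finset.mem_filter, Finset.mem_univ, true_and] at hW ⊢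
      obtain ⟨w₀, hw₀W, hw₀a⟩ := hW
      exact ⟨map_ne_a a W, w₀.val, (mem_map_sub _ _).2 ⟨w₀.2, hw₀W⟩, hw₀a⟩
    · intro W hW
      simp only [Finset.mem_filter, Finset.mem_univ, true_and] at hW ⊢
      obtain ⟨haW, w₀, hw₀W, hw₀a⟩ := hW
      have hw₀ : w₀ ≠ a := fun h => G.loopless.irrefl a (h ▸ hw₀a)
      exact ⟨⟨w₀, hw₀⟩, Finset.mem_subtype.2 (by simpa using hw₀W), hw₀a⟩
    · intro W _; rw [subtype_map_val]
    · intro W hW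
      simp only [Finset.mem_filter, Finset.mem_univ, true_and] at hW
      exact Finset.subtype_map_of_mem (fun w hw => fun h => hW.1 (h ▸ hw))
    · intro W hW
      simp only [Finset.mem_filter, Finset.mem_univ, true_and] at hW
      have hext : (extN G (W.map (Embedding.subtype _))).card =
          (extN (Gdel G a) W).card + 1 := by
        rw [del_extN_hit G a W hW,
          Finset.card_insert_of_notMem (map_ne_a a _), Finset.card_map]
      rw [hext, Finset.card_map, pow_succ]
      ring
  · rw [Finset.mul_sum]
    refine Finset.sum_bij' (fun W _ => W.map (Embedding.subtype _))
      (fun W _ => W.subtype (fun v => v ≠ a)) ?_ ?_ ?_ ?_ ?_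
    · intro W hW
      simp only [Finset.mem_filter, Finset.mem_univ, true_and, not_exists] at hW ⊢
      refine ⟨map_ne_a a W, fun w hw => ?_⟩
      obtain ⟨hwa, hwW⟩ := (mem_map_sub _ _).1 hw
      exact fun hadj => hW ⟨w, hwa⟩ ⟨hwW, hadj⟩
    · intro W hW
      simp only [Finset.mem_filter, Finset.mem_univ, true_and, not_exists] at hW ⊢
      rintro w ⟨hw, hadj⟩
      exact hW.2 w.val (by simpa using Finset.mem_subtype.1 hw) hadj
    · intro W _; rw [subtype_map_val]
    · intro W hW
      simp only [Finset.mem_filter, Finset.mem_univ, true_and] at hW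
      exact Finset.subtype_map_of_mem (fun w hw => fun h => hW.1 (h ▸ hw))
    · intro W hW
      simp only [Finset.mem_filter, Finset.mem_univ, true_and, not_exists] at hW
      have hext : (extN G (W.map (Embedding.subtype _))).card = (extN (Gdel G a) W).card := by
        rw [← del_extN_miss G a W (fun w hw hadj => hW w ⟨hw, hadj⟩), Finset.card_map]
      rw [hext, Finset.card_map]
end

section
set_option linter.unusedSectionVars false
variable {V : Type} [Fintype V] (G : SimpleGraph V) (a : V)

private lemma JP_split (x y : ℝ) :
    JP G x y =
      (∑ W ∈ Finset.univ.filter (fun W : Finset V => a ∈ W ∧ ∃ w ∈ W, G.Adj a w),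
        x ^ W.card * y ^ (extN G W).card)
      + (∑ W ∈ Finset.univ.filter (fun W : Finset V => a ∈ W ∧ ∀ w ∈ W, ¬ G.Adj a w),
        x ^ W.card * y ^ (extN G W).card)
      + (∑ W ∈ Finset.univ.filter (fun W : Finset V => a ∉ W ∧ ∃ w ∈ W, G.Adj a w),
        x ^ W.card * y ^ (extN G W).card)
      + (∑ W ∈ Finset.univ.filter (fun W : Finset V => a ∉ W ∧ ∀ w ∈ W, ¬ G.Adj a w),
        x ^ W.card * y ^ (extN G W).card) := by
  rw [JP, Finset.sum_filter, Finset.sum_filter, Finset.sum_filter, Finset.sum_filter,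
    ← Finset.sum_add_distrib, ← Finset.sum_add_distrib, ← Finset.sum_add_distrib]
  apply Finset.sum_congr rfl
  intro W _
  by_cases h1 : a ∈ W <;> by_cases h2 : ∃ w ∈ W, G.Adj a w
  · have h3 : ¬ ∀ w ∈ W, ¬ G.Adj a w := by push_neg; exact h2
    simp [h1, h2, h3]
  · have h3 : ∀ w ∈ W, ¬ G.Adj a w := by push_neg at h2; exact h2
    simp [h1, h2, if_pos h3]
  · have h3 : ¬ ∀ w ∈ W, ¬ G.Adj a w := by push_neg; exact h2
    simp [h1, h2, h3]
  · have h3 : ∀ w ∈ W, ¬ G.Adj a w := by push_neg at h2; exact h2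
    simp [h1, h2, if_pos h3]
end

theorem J_cond_closed_nbhd_empty {V : Type} [Fintype V] (G : SimpleGraph V) (a : V) (x y : ℝ) :
    (1 - x - y) * ∑ W ∈ Finset.univ.filter
        (fun W : Finset V => a ∉ W ∧ ∀ w ∈ W, ¬ G.Adj a w),
      x ^ W.card * y ^ (extN G W).card
      = JP G x y
        - x * y ^ (Finset.univ.filter (fun v => G.Adj a v)).card *
            JP (GdelSet G {v : V | v = a ∨ G.Adj a v}) x y
        - x * JP (Gcon G a) x y - y * JP (Gdel G a) x y := by
  rw [JP_split G a x y, JP_con G a x y, JP_del G a x y, ← JP_dset G a x y]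
  ring
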